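/- arXiv:1805.00828 — 2 statements merged into one kernel-verified Lean document; each statement's English description precedes it below -/
import Mathlib

section
/- Let $\varphi_1,\dots,\varphi_{n_t}$ be snapshots in a Hilbert space $\mathbb{V}$, $\hat C$ their Gram matrix, and $\lambda_1\ge\cdots\ge\lambda_{n_t}$ its eigenvalues. For any $N$-dimensional subspace $V_N\subseteq\mathrm{span}\{\varphi_1,\dots,\varphi_{n_t}\}$, the projection error satisfies $\sum_{i=1}^{n_t} \|\varphi_i - P_{V_N}\varphi_i\|_{\mathbb{V}}^2 \ge \sum_{k=N+1}^{n_t} \lambda_k$, with equality when $V_N$ is spanned by the POD modes $\xi^i = \sum_j \psi^i_j \varphi_j$ built from the leading $N$ eigenvectors $\psi^1,\dots,\psi^N$ of $\hat C$. -/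
open scoped RealInnerProductSpace

open Matrix Finset

/-- Columns orthonormal from rows orthonormal. -/
lemma pod_col_orth {nt : ℕ} (ψ : Fin nt → Fin nt → ℝ)
    (horth : ∀ k l, dotProduct (ψ k) (ψ l) = if k = l then (1 : ℝ) else 0) :
    ∀ i j, (∑ k, ψ k i * ψ k j) = if i = j then (1 : ℝ) else 0 := by
  intro i j
  set M : Matrix (Fin nt) (Fin nt) ℝ := Matrix.of ψ with hM
  have h1 : M * M.transpose = 1 := by
    ext k l
    simpa [Matrix.mul_apply, Matrix.one_apply, hM, dotProduct] using horth k l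
  have h2 : M.transpose * M = 1 := mul_eq_one_comm.mp h1
  have := congrFun (congrFun h2 i) j
  simpa [Matrix.mul_apply, Matrix.one_apply, hM] using this

/-- Key algebraic identity: orthogonal change of coordinates preserves sums of squares. -/
lemma pod_sum_sq {nt : ℕ} (ψ : Fin nt → Fin nt → ℝ)
    (hrow : ∀ k l, (∑ i, ψ k i * ψ l i) = if k = l then (1 : ℝ) else 0)
    (c : Fin nt → ℝ) :
    ∑ i, (∑ k, ψ k i * c k) ^ 2 = ∑ k, (c k) ^ 2 := by
  have h1 : ∀ i, (∑ k, ψ k i * c k) ^ 2 = ∑ k, ∑ l, (c k * c l) * (ψ k i * ψ l i) := by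
    intro i
    rw [sq, Finset.sum_mul_sum]
    apply Finset.sum_congr rfl; intro k _
    apply Finset.sum_congr rfl; intro l _
    ring
  simp_rw [h1]
  rw [Finset.sum_comm]
  have h2 : ∀ k, (∑ i, ∑ l, (c k * c l) * (ψ k i * ψ l i)) = (c k)^2 := by
    intro k
    rw [Finset.sum_comm]
    have h3 : ∀ l, (∑ i, (c k * c l) * (ψ k i * ψ l i)) = (c k * c l) * ∑ i, ψ k i * ψ l i :=
      fun l => (Finset.mul_sum _ _ _).symm
    rw [Finset.sum_congr rfl fun l _ => h3 l]
    rw [Finset.sum_congr rfl fun l _ => by rw [hrow k l]]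
    simp [mul_ite, sq]
  simp_rw [h2]

/-- Key real inequality (discrete Ky Fan bound). -/
lemma pod_key_ineq {nt : ℕ} (N : ℕ) (hN : N ≤ nt) (lam t : Fin nt → ℝ)
    (hlam0 : ∀ k, 0 ≤ lam k)
    (hsort : ∀ k l : Fin nt, k ≤ l → lam l ≤ lam k)
    (ht0 : ∀ k, 0 ≤ t k) (ht1 : ∀ k, t k ≤ 1)
    (htN : ∑ k, t k ≤ (N : ℝ)) :
    ∑ k, lam k * t k ≤ ∑ k ∈ Finset.univ.filter fun k : Fin nt => ¬ (N ≤ (k : ℕ)), lam k := by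
  rcases eq_or_lt_of_le hN with h | h
  · have hall : (Finset.univ.filter fun k : Fin nt => ¬ (N ≤ (k : ℕ))) = Finset.univ := by
      ext k; simp; omega
    rw [hall]
    apply Finset.sum_le_sum
    intro k _
    calc lam k * t k ≤ lam k * 1 := mul_le_mul_of_nonneg_left (ht1 k) (hlam0 k)
      _ = lam k := mul_one _
  · set μ := lam ⟨N, h⟩ with hμ
    have hμ0 : 0 ≤ μ := hlam0 _
    set s₁ := Finset.univ.filter (fun k : Fin nt => ¬ (N ≤ (k : ℕ))) with hs₁
    set s₂ := Finset.univ.filter (fun k : Fin nt => (N ≤ (k : ℕ))) with hs₂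
    have hcard : s₁.card = N := by
      have he : s₁ = Finset.map (Fin.castLEEmb h.le) Finset.univ := by
        ext k
        simp only [hs₁, Finset.mem_filter, Finset.mem_univ, true_and, Finset.mem_map,
          Fin.castLEEmb_apply]
        constructor
        · intro hk
          exact ⟨⟨(k : ℕ), by omega⟩, by ext; simp⟩
        · rintro ⟨m, rfl⟩; simp
      rw [he, Finset.card_map, Finset.card_univ, Fintype.card_fin]
    -- split the sum
    have hsplit : ∀ f : Fin nt → ℝ, ∑ k, f k = ∑ k ∈ s₁, f k + ∑ k ∈ s₂, f k := by
      intro f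
      rw [hs₁, hs₂]
      exact (Finset.sum_filter_not_add_sum_filter Finset.univ _ f).symm
    rw [hsplit (fun k => lam k * t k)]
    have hb1 : ∑ k ∈ s₁, lam k * t k ≤ ∑ k ∈ s₁, (lam k - μ * (1 - t k)) := by
      apply Finset.sum_le_sum
      intro k hk
      have hkN : (k : ℕ) < N := by
        simp only [hs₁, Finset.mem_filter] at hk; omega
      have hlk : μ ≤ lam k := hsort k ⟨N, h⟩ (by simp [Fin.le_def]; omega)
      nlinarith [ht1 k, ht0 k]
    have hb2 : ∑ k ∈ s₂, lam k * t k ≤ ∑ k ∈ s₂, μ * t k := by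
      apply Finset.sum_le_sum
      intro k hk
      have hkN : N ≤ (k : ℕ) := by
        simp only [hs₂, Finset.mem_filter] at hk; omega
      have hlk : lam k ≤ μ := hsort ⟨N, h⟩ k (by simp [Fin.le_def]; omega)
      nlinarith [ht0 k]
    have e1 : ∑ k ∈ s₁, (lam k - μ * (1 - t k))
        = ∑ k ∈ s₁, lam k - μ * (s₁.card : ℝ) + μ * ∑ k ∈ s₁, t k := by
      simp only [mul_sub, mul_one, Finset.sum_sub_distrib, Finset.sum_const, nsmul_eq_mul,
        ← Finset.mul_sum]
      ring
    have e2 : ∑ k ∈ s₂, μ * t k = μ * ∑ k ∈ s₂, t k := by rw [Finset.mul_sum]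
    have hts := hsplit t
    have hmono : μ * ∑ k, t k ≤ μ * (N : ℝ) := mul_le_mul_of_nonneg_left htN hμ0
    rw [hcard] at e1
    have hts2 : μ * ∑ k, t k = μ * ∑ k ∈ s₁, t k + μ * ∑ k ∈ s₂, t k := by rw [hts, mul_add]
    linarith

lemma pod_bdd {V : Type*} [NormedAddCommGroup V] [InnerProductSpace ℝ V]
    (K : Submodule ℝ V) (u : V) :
    BddBelow (Set.range fun v : K => ‖u - (v : V)‖ ^ 2) := by
  refine ⟨0, ?_⟩
  rintro x ⟨v, rfl⟩
  positivity

lemma pod_inf_sq {V : Type*} [NormedAddCommGroup V] [InnerProductSpace ℝ V]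
    (K : Submodule ℝ V) [K.HasOrthogonalProjection] (u : V) :
    (⨅ v : K, ‖u - (v : V)‖ ^ 2) = ‖u - (Submodule.orthogonalProjectionOnto K u : V)‖ ^ 2 := by
  apply le_antisymm
  · exact ciInf_le (pod_bdd K u) (Submodule.orthogonalProjectionOnto K u)
  · refine le_ciInf fun v => ?_
    have h2 : ‖u - (Submodule.orthogonalProjectionOnto K u : V)‖ ≤ ‖u - (v : V)‖ := by
      rw [← Submodule.starProjection_apply, Submodule.starProjection_minimal]
      exact ciInf_le ⟨0, by rintro x ⟨w, rfl⟩; positivity⟩ v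
    exact pow_le_pow_left₀ (norm_nonneg _) h2 2

lemma pod_parseval {V : Type*} [NormedAddCommGroup V] [InnerProductSpace ℝ V]
    (K : Submodule ℝ V) [K.HasOrthogonalProjection] {ι : Type*} [Fintype ι] [DecidableEq ι]
    (e : OrthonormalBasis ι ℝ K) (u : V) :
    ‖(Submodule.orthogonalProjectionOnto K u : V)‖ ^ 2 = ∑ m, ⟪((e m : K) : V), u⟫ ^ 2 := by
  have h1 := e.sum_inner_mul_inner (Submodule.orthogonalProjectionOnto K u) (Submodule.orthogonalProjectionOnto K u)
  have h2 : ∀ m : ι, ⟪e m, Submodule.orthogonalProjectionOnto K u⟫ = ⟪((e m : K) : V), u⟫ :=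
    fun m => Submodule.inner_orthogonalProjectionOnto_eq_of_mem_left (K := K) (e m) u
  have h3 : ∀ m : ι, ⟪Submodule.orthogonalProjectionOnto K u, e m⟫ = ⟪((e m : K) : V), u⟫ :=
    fun m => by rw [real_inner_comm]; exact h2 m
  calc ‖(Submodule.orthogonalProjectionOnto K u : V)‖ ^ 2
      = ⟪Submodule.orthogonalProjectionOnto K u, Submodule.orthogonalProjectionOnto K u⟫ := by
        rw [real_inner_self_eq_norm_sq]; rfl
    _ = ∑ m, ⟪((e m : K) : V), u⟫ ^ 2 := by
        rw [← h1]
        refine Finset.sum_congr rfl fun m _ => ?_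
        rw [h2 m, h3 m, sq]

lemma pod_onb_coe_orthonormal {V : Type*} [NormedAddCommGroup V] [InnerProductSpace ℝ V]
    (K : Submodule ℝ V) {ι : Type*} [Fintype ι] [DecidableEq ι] (e : OrthonormalBasis ι ℝ K) :
    Orthonormal ℝ (fun m : ι => ((e m : K) : V)) := by
  rw [orthonormal_iff_ite]
  intro i j
  have := (orthonormal_iff_ite.mp e.orthonormal) i j
  simpa [Submodule.coe_inner] using this

/-- POD optimality: for any `N`-dimensional subspace `V_N` of the span of the snapshots,
the total squared projection error is at least the tail sum `∑_{k>N} λ_k` of the sorted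
eigenvalues of the Gram matrix `Ĉ`, with equality for the POD space spanned by the modes
`ξⁱ = ∑ⱼ ψⁱⱼ φⱼ` built from the leading `N` (orthonormal) eigenvectors of `Ĉ`. -/
theorem pod_optimality
    {V : Type*} [NormedAddCommGroup V] [InnerProductSpace ℝ V]
    (nt N : ℕ) (hN : N ≤ nt) (φ : Fin nt → V)
    (Chat : Matrix (Fin nt) (Fin nt) ℝ) (hChat : ∀ i j, Chat i j = ⟪φ i, φ j⟫)
    (lam : Fin nt → ℝ) (ψ : Fin nt → Fin nt → ℝ)
    (heig : ∀ k, Chat.mulVec (ψ k) = lam k • ψ k)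
    (horth : ∀ k l, dotProduct (ψ k) (ψ l) = if k = l then (1 : ℝ) else 0)
    (hsort : ∀ k l : Fin nt, k ≤ l → lam l ≤ lam k) :
    (∀ VN : Submodule ℝ V, VN ≤ Submodule.span ℝ (Set.range φ) →
      Module.finrank ℝ VN = N →
      (∑ k ∈ Finset.univ.filter fun k : Fin nt => N ≤ (k : ℕ), lam k) ≤
        ∑ i, ⨅ v : VN, ‖φ i - (v : V)‖ ^ 2) ∧
    (∑ i, ⨅ v : (Submodule.span ℝ
          (Set.range fun k : Fin N => ∑ j, ψ (Fin.castLE hN k) j • φ j) : Submodule ℝ V),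
        ‖φ i - (v : V)‖ ^ 2) =
      ∑ k ∈ Finset.univ.filter fun k : Fin nt => N ≤ (k : ℕ), lam k := by
  classical
  set ξ : Fin nt → V := fun k => ∑ j, ψ k j • φ j with hξdef
  have hrow : ∀ k l, (∑ i, ψ k i * ψ l i) = if k = l then (1 : ℝ) else 0 := by
    intro k l; simpa [dotProduct] using horth k l
  have hcol := pod_col_orth ψ horth
  -- inner products of the modes
  have hxi : ∀ k l, ⟪ξ k, ξ l⟫ = if k = l then lam k else 0 := by
    intro k l
    have h1 : ⟪ξ k, ξ l⟫ = ∑ i, ψ k i * ∑ j, Chat i j * ψ l j := by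
      rw [hξdef]
      rw [sum_inner]
      refine Finset.sum_congr rfl fun i _ => ?_
      rw [real_inner_smul_left, inner_sum]
      congr 1
      refine Finset.sum_congr rfl fun j _ => ?_
      rw [real_inner_smul_right, hChat i j]
      ring
    have h2 : (∑ i, ψ k i * ∑ j, Chat i j * ψ l j)
        = dotProduct (ψ k) (Chat.mulVec (ψ l)) := by
      simp [dotProduct, Matrix.mulVec]
    rw [h1, h2, heig l]
    have h3 : dotProduct (ψ k) (lam l • ψ l) = lam l * dotProduct (ψ k) (ψ l) := by
      simp [dotProduct, Finset.mul_sum, Pi.smul_apply]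
      refine Finset.sum_congr rfl fun i _ => by ring
    rw [h3, horth k l]
    by_cases hkl : k = l <;> simp [hkl]
  have hlam0 : ∀ k, 0 ≤ lam k := by
    intro k
    have h := hxi k k
    rw [if_pos rfl] at h
    rw [← h]
    exact real_inner_self_nonneg
  have hnormxi : ∀ k, ‖ξ k‖ ^ 2 = lam k := by
    intro k
    have h := hxi k k
    rw [if_pos rfl] at h
    rw [← h, real_inner_self_eq_norm_sq]
  -- snapshots in terms of modes
  have hphi : ∀ i, φ i = ∑ k, ψ k i • ξ k := by
    intro i
    have : ∑ k, ψ k i • ξ k = ∑ j, (∑ k, ψ k i * ψ k j) • φ j := by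
      rw [hξdef]
      simp only [Finset.smul_sum, smul_smul]
      rw [Finset.sum_comm]
      refine Finset.sum_congr rfl fun j _ => ?_
      rw [Finset.sum_smul]
    rw [this]
    rw [Finset.sum_congr rfl fun j _ => by rw [hcol i j]]
    simp [ite_smul]
  -- norm of combinations of modes
  have hcomb : ∀ (s : Finset (Fin nt)) (a : Fin nt → ℝ),
      ‖∑ k ∈ s, a k • ξ k‖ ^ 2 = ∑ k ∈ s, a k ^ 2 * lam k := by
    intro s a
    rw [← real_inner_self_eq_norm_sq, sum_inner]
    rw [Finset.sum_congr rfl fun k hk => by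
      rw [real_inner_smul_left, inner_sum,
        Finset.sum_congr rfl fun l hl => by rw [real_inner_smul_right, hxi k l]]]
    refine Finset.sum_congr rfl fun k hk => ?_
    rw [Finset.sum_congr rfl fun l hl => by
      rw [show a l * (if k = l then lam k else 0) = if k = l then a l * lam k else 0 by
        by_cases h : k = l <;> simp [h]]]
    rw [Finset.sum_ite_eq s k (fun l => a l * lam k), if_pos hk]
    ring
  -- trace identity
  have htr : ∑ i, ‖φ i‖ ^ 2 = ∑ k, lam k := by
    have h1 : ∀ i, ‖φ i‖ ^ 2 = ∑ k, (ψ k i) ^ 2 * lam k := by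
      intro i; rw [hphi i, hcomb]
    rw [Finset.sum_congr rfl fun i _ => h1 i, Finset.sum_comm]
    refine Finset.sum_congr rfl fun k _ => ?_
    have h2 : ∑ i, ψ k i ^ 2 * lam k = (∑ i, ψ k i * ψ k i) * lam k := by
      rw [Finset.sum_mul]
      exact Finset.sum_congr rfl fun i _ => by ring
    rw [h2, hrow k k, if_pos rfl, one_mul]
  have hsplitlam :
      ∑ k, lam k = (∑ k ∈ Finset.univ.filter fun k : Fin nt => N ≤ (k : ℕ), lam k)
        + ∑ k ∈ Finset.univ.filter (fun k : Fin nt => ¬ (N ≤ (k : ℕ))), lam k := by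
    exact (Finset.sum_filter_add_sum_filter_not Finset.univ _ lam).symm
  constructor
  · -- lower bound for arbitrary VN
    intro VN hle hrank
    haveI : FiniteDimensional ℝ (Submodule.span ℝ (Set.range φ)) :=
      FiniteDimensional.span_of_finite ℝ (Set.finite_range φ)
    haveI : FiniteDimensional ℝ VN := Submodule.finiteDimensional_of_le hle
    haveI : CompleteSpace VN := FiniteDimensional.complete ℝ VN
    have hinf : ∀ u : V, (⨅ v : VN, ‖u - (v : V)‖ ^ 2)
        = ‖u - (Submodule.orthogonalProjectionOnto VN u : V)‖ ^ 2 := fun u => pod_inf_sq VN u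
    have hpyth : ∀ u : V, ‖u - (Submodule.orthogonalProjectionOnto VN u : V)‖ ^ 2
        = ‖u‖ ^ 2 - ‖(Submodule.orthogonalProjectionOnto VN u : V)‖ ^ 2 := by
      intro u
      have h0 := norm_add_sq_real (u - (Submodule.orthogonalProjectionOnto VN u : V))
        ((Submodule.orthogonalProjectionOnto VN u : V))
      rw [sub_add_cancel] at h0
      rw [show ⟪u - (Submodule.orthogonalProjectionOnto VN u : V), (Submodule.orthogonalProjectionOnto VN u : V)⟫ = 0 from
        Submodule.starProjection_inner_eq_zero (K := VN) u _ (Submodule.coe_mem _)] at h0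
      linarith
    set e := stdOrthonormalBasis ℝ VN with he
    have heo : Orthonormal ℝ (fun m => ((e m : VN) : V)) := pod_onb_coe_orthonormal VN e
    have hpars : ∀ u : V, ‖(Submodule.orthogonalProjectionOnto VN u : V)‖ ^ 2
        = ∑ m, ⟪((e m : VN) : V), u⟫ ^ 2 := fun u => pod_parseval VN e u
    -- normalized modes
    set u' : Fin nt → V := fun k => if lam k = 0 then 0 else (Real.sqrt (lam k))⁻¹ • ξ k
      with hu'def
    have hξu : ∀ k, ξ k = Real.sqrt (lam k) • u' k := by
      intro k
      by_cases hk : lam k = 0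
      · have : ‖ξ k‖ ^ 2 = 0 := by rw [hnormxi k, hk]
        have hz : ξ k = 0 := by
          rwa [pow_eq_zero_iff (by norm_num), norm_eq_zero] at this
        simp [hu'def, hk, hz]
      · have hkpos : 0 < lam k := lt_of_le_of_ne (hlam0 k) (Ne.symm hk)
        have hs : Real.sqrt (lam k) ≠ 0 := ne_of_gt (Real.sqrt_pos.mpr hkpos)
        simp only [hu'def, if_neg hk, smul_smul, mul_inv_cancel₀ hs, one_smul]
    have hu'norm : ∀ k, ‖u' k‖ ^ 2 ≤ 1 := by
      intro k
      by_cases hk : lam k = 0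
      · simp [hu'def, hk]
      · have hkpos : 0 < lam k := lt_of_le_of_ne (hlam0 k) (Ne.symm hk)
        have : ‖u' k‖ ^ 2 = ((Real.sqrt (lam k))⁻¹) ^ 2 * ‖ξ k‖ ^ 2 := by
          simp [hu'def, if_neg hk, norm_smul, mul_pow]
        rw [this, hnormxi k, inv_pow, Real.sq_sqrt (hlam0 k),
          inv_mul_cancel₀ (ne_of_gt hkpos)]
    set t : Fin nt → ℝ := fun k => ∑ m, ⟪((e m : VN) : V), u' k⟫ ^ 2 with htdef
    have hsm : ∀ k, ∑ m, ⟪((e m : VN) : V), ξ k⟫ ^ 2 = lam k * t k := by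
      intro k
      rw [htdef, Finset.mul_sum]
      refine Finset.sum_congr rfl fun m _ => ?_
      rw [hξu k, real_inner_smul_right, mul_pow, Real.sq_sqrt (hlam0 k)]
    have hproj_sum : ∑ i, ‖(Submodule.orthogonalProjectionOnto VN (φ i) : V)‖ ^ 2 = ∑ k, lam k * t k := by
      calc ∑ i, ‖(Submodule.orthogonalProjectionOnto VN (φ i) : V)‖ ^ 2
          = ∑ i, ∑ m, ⟪((e m : VN) : V), φ i⟫ ^ 2 :=
            Finset.sum_congr rfl fun i _ => hpars (φ i)
        _ = ∑ m, ∑ i, ⟪((e m : VN) : V), φ i⟫ ^ 2 := Finset.sum_comm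
        _ = ∑ m, ∑ k, ⟪((e m : VN) : V), ξ k⟫ ^ 2 := by
            refine Finset.sum_congr rfl fun m _ => ?_
            have hform : ∀ i, ⟪((e m : VN) : V), φ i⟫
                = ∑ k, ψ k i * ⟪((e m : VN) : V), ξ k⟫ := by
              intro i
              rw [hphi i, inner_sum]
              exact Finset.sum_congr rfl fun k _ => by rw [real_inner_smul_right]
            rw [Finset.sum_congr rfl fun i _ => by rw [hform i]]
            exact pod_sum_sq ψ hrow _
        _ = ∑ k, ∑ m, ⟪((e m : VN) : V), ξ k⟫ ^ 2 := Finset.sum_comm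
        _ = ∑ k, lam k * t k := Finset.sum_congr rfl fun k _ => hsm k
    have ht0 : ∀ k, 0 ≤ t k := fun k => Finset.sum_nonneg fun m _ => sq_nonneg _
    have ht1 : ∀ k, t k ≤ 1 := by
      intro k
      have hb := heo.sum_inner_products_le (u' k) (s := Finset.univ)
      have : ∑ m, ⟪((e m : VN) : V), u' k⟫ ^ 2
          = ∑ m, ‖⟪((e m : VN) : V), u' k⟫‖ ^ 2 := by
        refine Finset.sum_congr rfl fun m _ => ?_
        rw [Real.norm_eq_abs, sq_abs]
      rw [htdef]
      calc ∑ m, ⟪((e m : VN) : V), u' k⟫ ^ 2 ≤ ‖u' k‖ ^ 2 := by rw [this]; exact hb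
        _ ≤ 1 := hu'norm k
    have htN : ∑ k, t k ≤ (N : ℝ) := by
      have hswap : ∑ k, t k = ∑ m, ∑ k, ⟪((e m : VN) : V), u' k⟫ ^ 2 := Finset.sum_comm
      have hu'orth : Orthonormal ℝ (fun k : {k : Fin nt // lam k ≠ 0} => u' (k : Fin nt)) := by
        rw [orthonormal_iff_ite]
        rintro ⟨k, hk⟩ ⟨l, hl⟩
        by_cases hkl : k = l
        · subst hkl
          rw [if_pos rfl, real_inner_self_eq_norm_sq]
          have h5 : ‖u' k‖ ^ 2 = ((Real.sqrt (lam k))⁻¹) ^ 2 * ‖ξ k‖ ^ 2 := by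
            simp [hu'def, if_neg hk, norm_smul, mul_pow]
          rw [h5, hnormxi k, inv_pow, Real.sq_sqrt (hlam0 k), inv_mul_cancel₀ hk]
        · have hne : (⟨k, hk⟩ : {k : Fin nt // lam k ≠ 0}) ≠ ⟨l, hl⟩ := by simp [hkl]
          rw [if_neg hne]
          simp only [hu'def, if_neg hk, if_neg hl, real_inner_smul_left,
            real_inner_smul_right, hxi k l, if_neg hkl, mul_zero]
      have hper : ∀ m, ∑ k, ⟪((e m : VN) : V), u' k⟫ ^ 2 ≤ 1 := by
        intro m
        have hzero : ∀ k, lam k = 0 → ⟪((e m : VN) : V), u' k⟫ ^ 2 = 0 := by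
          intro k hk; simp [hu'def, hk]
        have hfil : ∑ k, ⟪((e m : VN) : V), u' k⟫ ^ 2
            = ∑ k ∈ Finset.univ.filter (fun k => lam k ≠ 0), ⟪((e m : VN) : V), u' k⟫ ^ 2 := by
          symm
          apply Finset.sum_filter_of_ne
          intro k _ hne
          intro hlk
          exact hne (hzero k hlk)
        have hsub : ∑ k ∈ Finset.univ.filter (fun k => lam k ≠ 0), ⟪((e m : VN) : V), u' k⟫ ^ 2
            = ∑ k : {k : Fin nt // lam k ≠ 0}, ⟪((e m : VN) : V), u' (k : Fin nt)⟫ ^ 2 := by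
          apply Finset.sum_subtype
          intro k; simp
        have hbess := hu'orth.sum_inner_products_le ((e m : VN) : V) (s := Finset.univ)
        have hnrm : ‖((e m : VN) : V)‖ = 1 := heo.1 m
        rw [hfil, hsub]
        calc ∑ k : {k : Fin nt // lam k ≠ 0}, ⟪((e m : VN) : V), u' (k : Fin nt)⟫ ^ 2
            = ∑ k : {k : Fin nt // lam k ≠ 0}, ‖⟪u' (k : Fin nt), ((e m : VN) : V)⟫‖ ^ 2 := by
              refine Finset.sum_congr rfl fun k _ => ?_
              rw [Real.norm_eq_abs, sq_abs, real_inner_comm]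
          _ ≤ ‖((e m : VN) : V)‖ ^ 2 := hbess
          _ = 1 := by rw [hnrm]; norm_num
      calc ∑ k, t k = ∑ m, ∑ k, ⟪((e m : VN) : V), u' k⟫ ^ 2 := hswap
        _ ≤ ∑ m : Fin (Module.finrank ℝ VN), (1 : ℝ) :=
            Finset.sum_le_sum fun m _ => hper m
        _ = (N : ℝ) := by
            rw [Finset.sum_const, Finset.card_univ, Fintype.card_fin, hrank, nsmul_eq_mul,
              mul_one]
    have hkey := pod_key_ineq N hN lam t hlam0 hsort ht0 ht1 htN
    have hfin : ∑ i, (⨅ v : VN, ‖φ i - (v : V)‖ ^ 2)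
        = ∑ i, (‖φ i‖ ^ 2 - ‖(Submodule.orthogonalProjectionOnto VN (φ i) : V)‖ ^ 2) := by
      refine Finset.sum_congr rfl fun i _ => ?_
      rw [hinf (φ i), hpyth (φ i)]
    rw [hfin, Finset.sum_sub_distrib, htr, hproj_sum]
    linarith [hkey, hsplitlam]
  · -- equality for the POD space
    set Kstar : Submodule ℝ V := Submodule.span ℝ
      (Set.range fun k : Fin N => ∑ j, ψ (Fin.castLE hN k) j • φ j) with hKdef
    have hgen : ∀ k : Fin N, (∑ j, ψ (Fin.castLE hN k) j • φ j) = ξ (Fin.castLE hN k) :=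
      fun k => rfl
    have hgen_mem : ∀ k : Fin nt, (k : ℕ) < N → ξ k ∈ Kstar := by
      intro k hk
      apply Submodule.subset_span
      refine ⟨⟨(k : ℕ), hk⟩, ?_⟩
      beta_reduce
      rw [hgen]
      congr 1
    have key : ∀ i, (⨅ v : Kstar, ‖φ i - (v : V)‖ ^ 2)
        = ∑ k ∈ Finset.univ.filter (fun k : Fin nt => N ≤ (k : ℕ)), (ψ k i) ^ 2 * lam k := by
      intro i
      set vstar : V := ∑ k ∈ Finset.univ.filter (fun k : Fin nt => ¬ (N ≤ (k : ℕ))),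
        ψ k i • ξ k with hvdef
      have hvmem : vstar ∈ Kstar := by
        refine Submodule.sum_mem _ fun k hk => Submodule.smul_mem _ _ (hgen_mem k ?_)
        simp only [Finset.mem_filter, Finset.mem_univ, true_and] at hk
        omega
      have hres : φ i - vstar = ∑ k ∈ Finset.univ.filter (fun k : Fin nt => N ≤ (k : ℕ)),
          ψ k i • ξ k := by
        rw [hphi i, hvdef]
        rw [← Finset.sum_filter_add_sum_filter_not Finset.univ (fun k : Fin nt => N ≤ (k : ℕ))
          (fun k => ψ k i • ξ k)]
        abel
      have hperp : ∀ w ∈ Kstar, ⟪φ i - vstar, w⟫ = 0 := by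
        intro w hw
        induction hw using Submodule.span_induction with
        | mem x hx =>
          obtain ⟨m, rfl⟩ := hx
          beta_reduce
          rw [hgen m, hres, sum_inner]
          refine Finset.sum_eq_zero fun k hk => ?_
          rw [real_inner_smul_left, hxi k (Fin.castLE hN m), if_neg, mul_zero]
          intro hkm
          simp only [Finset.mem_filter, Finset.mem_univ, true_and] at hk
          have h1 : (k : ℕ) = (m : ℕ) := by rw [hkm]; simp
          have h2 : (m : ℕ) < N := m.isLt
          omega
        | zero => simp
        | add x y hx hy ihx ihy => rw [inner_add_right, ihx, ihy, add_zero]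
        | smul a x hx ih => rw [real_inner_smul_right, ih, mul_zero]
      have hattain : ‖φ i - vstar‖ ^ 2
          = ∑ k ∈ Finset.univ.filter (fun k : Fin nt => N ≤ (k : ℕ)), (ψ k i) ^ 2 * lam k := by
        rw [hres, hcomb]
      apply le_antisymm
      · calc (⨅ v : Kstar, ‖φ i - (v : V)‖ ^ 2) ≤ ‖φ i - vstar‖ ^ 2 :=
            ciInf_le (pod_bdd Kstar (φ i)) (⟨vstar, hvmem⟩ : Kstar)
          _ = _ := hattain
      · refine le_ciInf fun v => ?_
        have hdecomp : φ i - (v : V) = (φ i - vstar) + (vstar - (v : V)) := by abel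
        have hz : ⟪φ i - vstar, vstar - (v : V)⟫ = 0 :=
          hperp _ (Submodule.sub_mem _ hvmem v.2)
        have hpy := norm_add_sq_real (φ i - vstar) (vstar - (v : V))
        rw [hz] at hpy
        rw [← hattain, hdecomp]
        nlinarith [sq_nonneg ‖vstar - (v : V)‖]
    rw [Finset.sum_congr rfl fun i _ => key i, Finset.sum_comm]
    refine Finset.sum_congr rfl fun k _ => ?_
    have h2 : ∑ i, ψ k i ^ 2 * lam k = (∑ i, ψ k i * ψ k i) * lam k := by
      rw [Finset.sum_mul]
      exact Finset.sum_congr rfl fun i _ => by ring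
    rw [h2, hrow k k, if_pos rfl, one_mul]
end

section
/- Weighted POD optimality: with positive weights $w_1,\dots,w_{n_t}$ and snapshots $\varphi_i$ in a Hilbert space $\mathbb{V}$, for any $N$-dimensional subspace $V_N$ of $\mathrm{span}\{\varphi_i\}$ one has $\sum_{i=1}^{n_t} w_i\|\varphi_i - P_{V_N}\varphi_i\|_{\mathbb{V}}^2 \ge \sum_{k=N+1}^{n_t}\lambda_k$, where $\lambda_1\ge\cdots\ge\lambda_{n_t}\ge 0$ are the eigenvalues of the weighted Gram matrix of the rescaled snapshots $\sqrt{w_i}\,\varphi_i$; equality holds for the weighted POD space. -/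
open scoped RealInnerProductSpace

open Finset

lemma pod_iInf_eq {V : Type*} [NormedAddCommGroup V] [InnerProductSpace ℝ V]
    (K : Submodule ℝ V) (u p : V) (hp : p ∈ K)
    (ho : ∀ v ∈ K, ⟪u - p, v⟫ = 0) :
    (⨅ v : K, ‖u - (v : V)‖ ^ 2) = ‖u - p‖ ^ 2 := by
  apply le_antisymm
  · have hb : BddBelow (Set.range fun v : K => ‖u - (v : V)‖ ^ 2) :=
      ⟨0, by rintro x ⟨v, rfl⟩; positivity⟩
    exact ciInf_le hb ⟨p, hp⟩
  · apply le_ciInf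
    intro v
    have h1 : u - (v : V) = (u - p) + (p - (v : V)) := by abel
    have h2 : ⟪u - p, p - (v : V)⟫ = 0 := ho _ (K.sub_mem hp v.2)
    have h3 : ‖u - (v : V)‖ ^ 2 = ‖u - p‖ ^ 2 + ‖p - (v : V)‖ ^ 2 := by
      rw [h1, norm_add_sq_real, h2]; ring
    nlinarith [sq_nonneg ‖p - (v : V)‖]

lemma pod_kyfan {nt N : ℕ} (hN : N ≤ nt) (lam t : Fin nt → ℝ)
    (hlam0 : ∀ k, 0 ≤ lam k) (hsort : ∀ k l : Fin nt, k ≤ l → lam l ≤ lam k)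
    (ht0 : ∀ k, 0 ≤ t k) (ht1 : ∀ k, t k ≤ 1) (hts : ∑ k, t k ≤ N) :
    ∑ k, lam k * t k ≤ ∑ k ∈ univ.filter fun k : Fin nt => (k : ℕ) < N, lam k := by
  rcases eq_or_lt_of_le hN with h | h
  · have hfil : (univ.filter fun k : Fin nt => (k : ℕ) < N) = univ := by
      ext k; subst h; simp [k.isLt]
    rw [hfil]
    apply Finset.sum_le_sum
    intro k _
    nlinarith [hlam0 k, ht1 k, ht0 k]
  · set μ := lam ⟨N, h⟩ with hμ
    have hμ0 : 0 ≤ μ := hlam0 _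
    have key : ∀ k : Fin nt, lam k * t k - (if (k : ℕ) < N then lam k else 0)
        ≤ μ * t k - (if (k : ℕ) < N then μ else 0) := by
      intro k
      by_cases hk : (k : ℕ) < N
      · simp only [hk, if_pos]
        have h1 : μ ≤ lam k := hsort k ⟨N, h⟩ (by simpa [Fin.le_def] using hk.le)
        nlinarith [ht1 k, ht0 k]
      · simp only [hk, if_neg, not_false_iff]
        have h1 : lam k ≤ μ := hsort ⟨N, h⟩ k (by simpa [Fin.le_def] using not_lt.mp hk)
        nlinarith [ht0 k]
    have h2 : ∑ k, (lam k * t k - (if (k : ℕ) < N then lam k else 0))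
        ≤ ∑ k, (μ * t k - (if (k : ℕ) < N then μ else 0)) :=
      Finset.sum_le_sum fun k _ => key k
    have h3 : ∑ k : Fin nt, (if (k : ℕ) < N then lam k else 0)
        = ∑ k ∈ univ.filter fun k : Fin nt => (k : ℕ) < N, lam k := by
      rw [Finset.sum_filter]
    have h4 : ∑ k : Fin nt, (if (k : ℕ) < N then μ else 0) = N * μ := by
      rw [Fin.sum_univ_eq_sum_range (fun j => if j < N then μ else 0)]
      rw [← Finset.sum_filter]
      have : (Finset.range nt).filter (· < N) = Finset.range N := by
        ext j; simp; omega
      rw [this, Finset.sum_const, Finset.card_range, nsmul_eq_mul]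
    have h5 : ∑ k : Fin nt, (μ * t k - (if (k : ℕ) < N then μ else 0))
        = μ * (∑ k, t k) - N * μ := by
      rw [Finset.sum_sub_distrib, h4, Finset.mul_sum]
    have h6 : μ * (∑ k, t k) - N * μ ≤ 0 := by nlinarith
    rw [Finset.sum_sub_distrib, h3] at h2
    linarith

lemma pod_weighted_error {V : Type*} [NormedAddCommGroup V] [InnerProductSpace ℝ V]
    {nt : ℕ} (φ : Fin nt → V) (w : Fin nt → ℝ) (hw : ∀ i, 0 < w i)
    (K : Submodule ℝ V) (q : Fin nt → V) (hqK : ∀ i, q i ∈ K)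
    (hqo : ∀ i, ∀ v ∈ K, ⟪Real.sqrt (w i) • φ i - q i, v⟫ = 0) :
    ∑ i, w i * ⨅ v : K, ‖φ i - (v : V)‖ ^ 2
      = ∑ i, ‖Real.sqrt (w i) • φ i - q i‖ ^ 2 := by
  apply Finset.sum_congr rfl
  intro i _
  set s := Real.sqrt (w i) with hs
  have hs0 : 0 < s := Real.sqrt_pos.mpr (hw i)
  have hss : s * s = w i := Real.mul_self_sqrt (hw i).le
  set p : V := s⁻¹ • q i with hp
  have hpK : p ∈ K := K.smul_mem _ (hqK i)
  have hφ : φ i - p = s⁻¹ • (s • φ i - q i) := by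
    rw [smul_sub, smul_smul, inv_mul_cancel₀ hs0.ne', one_smul]
  have ho : ∀ v ∈ K, ⟪φ i - p, v⟫ = 0 := by
    intro v hv
    rw [hφ, real_inner_smul_left, hqo i v hv, mul_zero]
  rw [pod_iInf_eq K (φ i) p hpK ho, hφ, norm_smul]
  have : ‖s⁻¹‖ = s⁻¹ := by rw [Real.norm_eq_abs, abs_of_pos (by positivity)]
  rw [this, mul_pow]
  rw [← hss]
  field_simp


/-- Weighted POD optimality: with positive weights `wᵢ`, for any `N`-dimensional subspace
`V_N` of the span of the snapshots, the weighted total squared projection error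
`∑ᵢ wᵢ ‖φᵢ - P_{V_N} φᵢ‖²` is at least the tail sum of the sorted eigenvalues of the
weighted Gram matrix `√(wᵢwⱼ)⟪φᵢ,φⱼ⟫` of the rescaled snapshots `√wᵢ φᵢ`; equality
holds for the weighted POD space built from its leading eigenvectors. -/
theorem weighted_pod_optimality
    {V : Type*} [NormedAddCommGroup V] [InnerProductSpace ℝ V]
    (nt N : ℕ) (hN : N ≤ nt) (φ : Fin nt → V)
    (w : Fin nt → ℝ) (hw : ∀ i, 0 < w i)
    (Chatw : Matrix (Fin nt) (Fin nt) ℝ)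
    (hChatw : ∀ i j, Chatw i j = Real.sqrt (w i) * Real.sqrt (w j) * ⟪φ i, φ j⟫)
    (lam : Fin nt → ℝ) (ψ : Fin nt → Fin nt → ℝ)
    (heig : ∀ k, Chatw.mulVec (ψ k) = lam k • ψ k)
    (horth : ∀ k l, dotProduct (ψ k) (ψ l) = if k = l then (1 : ℝ) else 0)
    (hsort : ∀ k l : Fin nt, k ≤ l → lam l ≤ lam k) :
    (∀ VN : Submodule ℝ V, VN ≤ Submodule.span ℝ (Set.range φ) →
      Module.finrank ℝ VN = N →
      (∑ k ∈ Finset.univ.filter fun k : Fin nt => N ≤ (k : ℕ), lam k) ≤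
        ∑ i, w i * ⨅ v : VN, ‖φ i - (v : V)‖ ^ 2) ∧
    (∑ i, w i * ⨅ v : (Submodule.span ℝ
          (Set.range fun k : Fin N =>
            ∑ j, ψ (Fin.castLE hN k) j • (Real.sqrt (w j) • φ j)) : Submodule ℝ V),
        ‖φ i - (v : V)‖ ^ 2) =
      ∑ k ∈ Finset.univ.filter fun k : Fin nt => N ≤ (k : ℕ), lam k := by
  classical
  set u : Fin nt → V := fun i => Real.sqrt (w i) • φ i with hu
  set ζ : Fin nt → V := fun k => ∑ j, ψ k j • u j with hζ
  have hCu : ∀ i j, ⟪u i, u j⟫ = Chatw i j := by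
    intro i j
    rw [hu]
    simp only [real_inner_smul_left, real_inner_smul_right, hChatw]
    ring
  have hCsymm : ∀ i j, Chatw i j = Chatw j i := by
    intro i j
    rw [hChatw, hChatw, real_inner_comm]
    ring
  have hzu : ∀ k i, ⟪ζ k, u i⟫ = lam k * ψ k i := by
    intro k i
    rw [hζ]
    simp only [sum_inner, real_inner_smul_left, hCu]
    have : ∑ j, ψ k j * Chatw j i = Chatw.mulVec (ψ k) i := by
      rw [Matrix.mulVec, dotProduct]
      exact Finset.sum_congr rfl fun j _ => by rw [hCsymm i j]; ring
    rw [this, heig k]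
    simp [Pi.smul_apply, smul_eq_mul]
  have hzz : ∀ k l, ⟪ζ k, ζ l⟫ = if k = l then lam k else 0 := by
    intro k l
    rw [show ζ l = ∑ j, ψ l j • u j from rfl]
    rw [inner_sum]
    simp only [real_inner_smul_right, hzu]
    have : ∑ j, ψ l j * (lam k * ψ k j) = lam k * dotProduct (ψ k) (ψ l) := by
      rw [dotProduct, Finset.mul_sum]
      exact Finset.sum_congr rfl fun j _ => by ring
    rw [this, horth]
    by_cases h : k = l <;> simp [h]
  have hznorm : ∀ k, ‖ζ k‖ ^ 2 = lam k := by
    intro k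
    rw [← real_inner_self_eq_norm_sq, hzz]
    simp
  have hlam0 : ∀ k, 0 ≤ lam k := fun k => (hznorm k) ▸ (sq_nonneg _)
  have hδ : ∀ i j, (∑ k, ψ k i * ψ k j) = if i = j then (1:ℝ) else 0 := by
    intro i j
    have hM : (Matrix.of ψ) * Matrix.transpose (Matrix.of ψ) = 1 := by
      ext k l
      rw [Matrix.mul_apply]
      simpa [dotProduct, Matrix.one_apply] using horth k l
    have hM2 : Matrix.transpose (Matrix.of ψ) * (Matrix.of ψ) = 1 :=
      mul_eq_one_comm.mp hM
    have := congrFun (congrFun hM2 i) j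
    rw [Matrix.mul_apply] at this
    simpa [Matrix.one_apply] using this
  have hud : ∀ i, u i = ∑ k, ψ k i • ζ k := by
    intro i
    calc u i = ∑ j, (∑ k, ψ k i * ψ k j) • u j := by
          simp only [hδ]
          simp [Finset.sum_ite_eq, ite_smul]
      _ = ∑ j, ∑ k, (ψ k i * ψ k j) • u j := by
          exact Finset.sum_congr rfl fun j _ => by rw [Finset.sum_smul]
      _ = ∑ k, ∑ j, (ψ k i * ψ k j) • u j := Finset.sum_comm
      _ = ∑ k, ψ k i • ζ k := by
          refine Finset.sum_congr rfl fun k _ => ?_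
          rw [hζ]
          rw [Finset.smul_sum]
          exact Finset.sum_congr rfl fun j _ => mul_smul _ _ _
  have key : ∀ e : V, ∑ i, ⟪u i, e⟫ ^ 2 = ∑ k, ⟪ζ k, e⟫ ^ 2 := by
    intro e
    have h1 : ∀ i, ⟪u i, e⟫ = ∑ k, ψ k i * ⟪ζ k, e⟫ := by
      intro i
      rw [hud i, sum_inner]
      exact Finset.sum_congr rfl fun k _ => by rw [real_inner_smul_left]
    calc ∑ i, ⟪u i, e⟫ ^ 2
        = ∑ i, ∑ k, ∑ l, (ψ k i * ψ l i) * (⟪ζ k, e⟫ * ⟪ζ l, e⟫) := by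
          refine Finset.sum_congr rfl fun i _ => ?_
          rw [h1, sq, Finset.sum_mul_sum]
          exact Finset.sum_congr rfl fun k _ => Finset.sum_congr rfl fun l _ => by ring
      _ = ∑ k, ∑ l, (∑ i, ψ k i * ψ l i) * (⟪ζ k, e⟫ * ⟪ζ l, e⟫) := by
          rw [Finset.sum_comm]
          refine Finset.sum_congr rfl fun k _ => ?_
          rw [Finset.sum_comm]
          refine Finset.sum_congr rfl fun l _ => ?_
          rw [Finset.sum_mul]
      _ = ∑ k, ⟪ζ k, e⟫ ^ 2 := by
          refine Finset.sum_congr rfl fun k _ => ?_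
          rw [Finset.sum_eq_single k]
          · rw [show (∑ i, ψ k i * ψ k i) = dotProduct (ψ k) (ψ k) from rfl, horth]
            simp [sq]
          · intro l _ hl
            rw [show (∑ i, ψ k i * ψ l i) = dotProduct (ψ k) (ψ l) from rfl, horth]
            simp [Ne.symm hl]
          · simp
  have htr : ∑ i, ‖u i‖ ^ 2 = ∑ k, lam k := by
    have hn : ∀ i, ‖u i‖ ^ 2 = ∑ k, ψ k i * (lam k * ψ k i) := by
      intro i
      rw [← real_inner_self_eq_norm_sq]
      nth_rewrite 1 [hud i]
      rw [sum_inner]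
      exact Finset.sum_congr rfl fun k _ => by rw [real_inner_smul_left, hzu]
    calc ∑ i, ‖u i‖ ^ 2 = ∑ i, ∑ k, ψ k i * (lam k * ψ k i) :=
          Finset.sum_congr rfl fun i _ => hn i
      _ = ∑ k, ∑ i, ψ k i * (lam k * ψ k i) := Finset.sum_comm
      _ = ∑ k, lam k := by
          refine Finset.sum_congr rfl fun k _ => ?_
          have : ∑ i, ψ k i * (lam k * ψ k i) = lam k * dotProduct (ψ k) (ψ k) := by
            rw [dotProduct, Finset.mul_sum]
            exact Finset.sum_congr rfl fun i _ => by ring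
          rw [this, horth]
          simp
  have hfilsplit : (∑ k ∈ univ.filter fun k : Fin nt => (k:ℕ) < N, lam k)
      + (∑ k ∈ univ.filter fun k : Fin nt => N ≤ (k:ℕ), lam k) = ∑ k, lam k := by
    have := Finset.sum_filter_add_sum_filter_not univ (fun k : Fin nt => (k:ℕ) < N) lam
    have hco : (univ.filter fun k : Fin nt => ¬ (k:ℕ) < N)
        = univ.filter fun k : Fin nt => N ≤ (k:ℕ) := by
      apply Finset.filter_congr
      intro k _
      simp [not_lt]
    rw [hco] at this
    exact this
  constructor
  · -- lower bound for arbitrary VN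
    intro VN hle hrank
    haveI : FiniteDimensional ℝ (Submodule.span ℝ (Set.range φ)) :=
      FiniteDimensional.span_of_finite ℝ (Set.finite_range φ)
    haveI : FiniteDimensional ℝ VN := Submodule.finiteDimensional_of_le hle
    haveI : CompleteSpace VN := FiniteDimensional.complete ℝ VN
    set q : Fin nt → V := fun i => (VN.orthogonalProjection (u i) : V) with hq
    have hqK : ∀ i, q i ∈ VN := fun i => (VN.orthogonalProjection (u i)).2
    have hqo : ∀ i, ∀ v ∈ VN, ⟪u i - q i, v⟫ = 0 := fun i =>
      Submodule.starProjection_inner_eq_zero (K := VN) (u i)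
    rw [pod_weighted_error φ w hw VN q hqK hqo]
    have hconv : (∑ i, ‖Real.sqrt (w i) • φ i - q i‖ ^ 2) = ∑ i, ‖u i - q i‖ ^ 2 := rfl
    rw [hconv]
    have hpyth : ∀ i, ‖u i - q i‖ ^ 2 = ‖u i‖ ^ 2 - ‖q i‖ ^ 2 := by
      intro i
      have h0 : ⟪u i - q i, q i⟫ = 0 := hqo i (q i) (hqK i)
      have h1 : u i = (u i - q i) + q i := by abel
      have h2 : ‖u i‖ ^ 2 = ‖u i - q i‖ ^ 2 + ‖q i‖ ^ 2 := by
        conv_lhs => rw [h1]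
        rw [norm_add_sq_real, h0]
        ring
      linarith
    -- orthonormal basis of VN
    let b : OrthonormalBasis (Fin N) ℝ VN :=
      (stdOrthonormalBasis ℝ VN).reindex (finCongr hrank)
    have hbo : Orthonormal ℝ (fun m : Fin N => ((b m : V))) := by
      rw [orthonormal_iff_ite]
      intro m m'
      have hb := b.orthonormal
      rw [orthonormal_iff_ite] at hb
      rw [← hb m m']
      rfl
    have hqnorm : ∀ i, ‖q i‖ ^ 2 = ∑ m, ⟪u i, (b m : V)⟫ ^ 2 := by
      intro i
      have h1 : ‖q i‖ = ‖VN.orthogonalProjection (u i)‖ := rfl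
      have h2 : ‖VN.orthogonalProjection (u i)‖ ^ 2
          = ∑ m, (b.repr (VN.orthogonalProjection (u i)) m) ^ 2 := by
        rw [← b.repr.norm_map (VN.orthogonalProjection (u i))]
        rw [EuclideanSpace.norm_eq]
        rw [Real.sq_sqrt (by positivity)]
        exact Finset.sum_congr rfl fun m _ => by rw [Real.norm_eq_abs, sq_abs]
      rw [h1, h2]
      refine Finset.sum_congr rfl fun m _ => ?_
      rw [b.repr_apply_apply]
      have h3 : (inner ℝ (b m) (VN.orthogonalProjection (u i)) : ℝ)
          = ⟪(b m : V), q i⟫ := rfl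
      rw [h3]
      have h4 : ⟪(b m : V), u i⟫ - ⟪(b m : V), q i⟫ = 0 := by
        rw [← inner_sub_right]
        rw [real_inner_comm]
        exact hqo i _ (b m).2
      have h5 : ⟪(b m : V), q i⟫ = ⟪(b m : V), u i⟫ := by linarith
      rw [h5, real_inner_comm]
    set S : Fin nt → ℝ := fun k => ∑ m, ⟪ζ k, (b m : V)⟫ ^ 2 with hS
    have hsumq : ∑ i, ‖q i‖ ^ 2 = ∑ k, S k := by
      calc ∑ i, ‖q i‖ ^ 2 = ∑ i, ∑ m, ⟪u i, (b m : V)⟫ ^ 2 :=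
            Finset.sum_congr rfl fun i _ => hqnorm i
        _ = ∑ m, ∑ i, ⟪u i, (b m : V)⟫ ^ 2 := Finset.sum_comm
        _ = ∑ m, ∑ k, ⟪ζ k, (b m : V)⟫ ^ 2 :=
            Finset.sum_congr rfl fun m _ => key _
        _ = ∑ k, S k := Finset.sum_comm
    have hS0 : ∀ k, 0 ≤ S k := fun k => Finset.sum_nonneg fun m _ => sq_nonneg _
    have hSle : ∀ k, S k ≤ lam k := by
      intro k
      have hb2 := hbo.sum_inner_products_le (ζ k) (s := univ)
      rw [hznorm k] at hb2
      refine le_trans (le_of_eq ?_) hb2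
      exact Finset.sum_congr rfl fun m _ => by
        rw [Real.norm_eq_abs, sq_abs, real_inner_comm]
    set t : Fin nt → ℝ := fun k => if 0 < lam k then S k / lam k else 0 with ht
    have ht0 : ∀ k, 0 ≤ t k := by
      intro k
      rw [ht]
      by_cases hk : 0 < lam k
      · simp only [hk, if_pos]
        positivity
      · simp [hk]
    have ht1 : ∀ k, t k ≤ 1 := by
      intro k
      rw [ht]
      by_cases hk : 0 < lam k
      · simp only [hk, if_pos]
        exact div_le_one_of_le₀ (hSle k) (hlam0 k)
      · simp [hk]
    have hlamt : ∀ k, lam k * t k = S k := by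
      intro k
      rw [ht]
      by_cases hk : 0 < lam k
      · simp only [hk, if_pos]
        field_simp
      · have hk0 : lam k = 0 := le_antisymm (not_lt.mp hk) (hlam0 k)
        have hz : ζ k = 0 := by
          have h6 := hznorm k
          rw [hk0, pow_eq_zero_iff (by norm_num : 2 ≠ 0)] at h6
          exact norm_eq_zero.mp h6
        simp [hk, hk0, hS, hz]
    have hts : ∑ k, t k ≤ N := by
      -- orthonormal family from positive eigenvalues
      set η : {k : Fin nt // 0 < lam k} → V :=
        fun x => (Real.sqrt (lam x.1))⁻¹ • ζ x.1 with hη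
      have hηo : Orthonormal ℝ η := by
        rw [orthonormal_iff_ite]
        rintro ⟨k, hk⟩ ⟨l, hl⟩
        rw [hη]
        simp only [real_inner_smul_left, real_inner_smul_right, hzz]
        by_cases h : k = l
        · subst h
          rw [if_pos rfl, if_pos rfl]
          have hs0 : Real.sqrt (lam k) ≠ 0 := by positivity
          field_simp
          rw [Real.sq_sqrt hk.le]
        · have h' : (⟨k, hk⟩ : {k : Fin nt // 0 < lam k}) ≠ ⟨l, hl⟩ := by
            simp [Subtype.ext_iff, h]
          simp [h, h']
      have hbes : ∀ m : Fin N, ∑ x : {k : Fin nt // 0 < lam k}, ⟪η x, (b m : V)⟫ ^ 2 ≤ 1 := by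
        intro m
        have hb2 := hηo.sum_inner_products_le ((b m : V)) (s := univ)
        have hbm : ‖(b m : V)‖ = 1 := hbo.1 m
        rw [hbm] at hb2
        simpa [Real.norm_eq_abs, sq_abs] using hb2
      have hηval : ∀ (x : {k : Fin nt // 0 < lam k}) (e : V),
          ⟪η x, e⟫ ^ 2 = ⟪ζ x.1, e⟫ ^ 2 / lam x.1 := by
        intro x e
        rw [hη]
        simp only [real_inner_smul_left]
        rw [mul_pow, div_eq_inv_mul]
        congr 1
        rw [← Real.sqrt_inv]
        rw [Real.sq_sqrt (inv_nonneg.mpr (hlam0 _))]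
      have hteq : ∑ k, t k = ∑ x : {k : Fin nt // 0 < lam k}, S x.1 / lam x.1 := by
        rw [ht]
        rw [← Finset.sum_filter]
        exact Finset.sum_subtype _ (by simp) _
      have hrew : ∀ x : {k : Fin nt // 0 < lam k},
          S x.1 / lam x.1 = ∑ m, ⟪η x, (b m : V)⟫ ^ 2 := by
        intro x
        rw [hS]
        rw [Finset.sum_div]
        exact Finset.sum_congr rfl fun m _ => (hηval x _).symm
      calc ∑ k, t k = ∑ x : {k : Fin nt // 0 < lam k}, ∑ m, ⟪η x, (b m : V)⟫ ^ 2 := by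
            rw [hteq]
            exact Finset.sum_congr rfl fun x _ => hrew x
        _ = ∑ m, ∑ x : {k : Fin nt // 0 < lam k}, ⟪η x, (b m : V)⟫ ^ 2 := Finset.sum_comm
        _ ≤ ∑ m : Fin N, (1 : ℝ) := Finset.sum_le_sum fun m _ => hbes m
        _ = N := by simp
    have hkf := pod_kyfan hN lam t hlam0 hsort ht0 ht1 hts
    have hSsum : ∑ k, S k = ∑ k, lam k * t k :=
      Finset.sum_congr rfl fun k _ => (hlamt k).symm
    have hfin : ∑ i, ‖u i - q i‖ ^ 2 = ∑ k, lam k - ∑ k, S k := by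
      rw [← htr, ← hsumq]
      rw [← Finset.sum_sub_distrib]
      exact Finset.sum_congr rfl fun i _ => hpyth i
    rw [hfin]
    rw [hSsum]
    linarith
  · -- equality for the POD space
    set K₀ : Submodule ℝ V := Submodule.span ℝ
        (Set.range fun k : Fin N => ∑ j, ψ (Fin.castLE hN k) j • u j) with hK₀
    set q : Fin nt → V :=
      fun i => ∑ k : Fin N, ψ (Fin.castLE hN k) i • ζ (Fin.castLE hN k) with hqdef
    have hgK : ∀ k : Fin N, ζ (Fin.castLE hN k) ∈ K₀ := by
      intro k
      exact Submodule.subset_span ⟨k, rfl⟩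
    have hqK : ∀ i, q i ∈ K₀ := fun i =>
      Submodule.sum_mem _ fun k _ => Submodule.smul_mem _ _ (hgK k)
    set T : Finset (Fin nt) := univ.filter fun k : Fin nt => N ≤ (k:ℕ) with hT
    have hqalt : ∀ i, q i = ∑ k ∈ univ.filter fun k : Fin nt => (k:ℕ) < N, ψ k i • ζ k := by
      intro i
      rw [hqdef]
      rw [show (univ.filter fun k : Fin nt => (k:ℕ) < N)
          = univ.map (Fin.castLEEmb hN) from ?_]
      · rw [Finset.sum_map]
        rfl
      · ext k
        simp only [Finset.mem_filter, Finset.mem_univ, true_and, Finset.mem_map,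
          Fin.castLEEmb_apply]
        constructor
        · intro hk
          exact ⟨⟨(k:ℕ), hk⟩, by ext; simp⟩
        · rintro ⟨a, _, rfl⟩
          simp [a.isLt]
    have hd : ∀ i, u i - q i = ∑ k ∈ T, ψ k i • ζ k := by
      intro i
      have hsplit := Finset.sum_filter_add_sum_filter_not univ
        (fun k : Fin nt => (k:ℕ) < N) (fun k => ψ k i • ζ k)
      have hco : (univ.filter fun k : Fin nt => ¬ (k:ℕ) < N) = T := by
        rw [hT]
        apply Finset.filter_congr
        intro k _
        simp [not_lt]
      rw [hco] at hsplit
      rw [hud i, ← hsplit, hqalt i]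
      abel
    have hqo : ∀ i, ∀ v ∈ K₀, ⟪u i - q i, v⟫ = 0 := by
      intro i v hv
      rw [hK₀, Submodule.mem_span_range_iff_exists_fun] at hv
      obtain ⟨c, rfl⟩ := hv
      rw [inner_sum]
      apply Finset.sum_eq_zero
      intro k _
      rw [real_inner_smul_right]
      have hz : ⟪u i - q i, ∑ j, ψ (Fin.castLE hN k) j • u j⟫ = 0 := by
        rw [show (∑ j, ψ (Fin.castLE hN k) j • u j) = ζ (Fin.castLE hN k) from rfl]
        rw [hd i, sum_inner]
        apply Finset.sum_eq_zero
        intro l hl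
        rw [real_inner_smul_left, hzz]
        have hlN : N ≤ (l : ℕ) := by
          rw [hT] at hl
          simpa using hl
        have hne : l ≠ Fin.castLE hN k := by
          intro hcontra
          have hval : (l : ℕ) = (k : ℕ) := congrArg Fin.val hcontra
          have := k.isLt
          omega
        rw [if_neg hne, mul_zero]
      rw [hz, mul_zero]
    have herr : ∑ i, ‖u i - q i‖ ^ 2 = ∑ k ∈ T, lam k := by
      have hnormi : ∀ i, ‖u i - q i‖ ^ 2 = ∑ k ∈ T, ψ k i * (lam k * ψ k i) := by
        intro i
        rw [← real_inner_self_eq_norm_sq, hd i]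
        rw [sum_inner]
        refine Finset.sum_congr rfl fun k hk => ?_
        rw [real_inner_smul_left, inner_sum]
        simp only [real_inner_smul_right]
        have : ∀ l ∈ T, ψ l i * ⟪ζ k, ζ l⟫ = if l = k then ψ k i * lam k else 0 := by
          intro l _
          rw [hzz]
          by_cases h : k = l
          · subst h; simp
          · simp [h, Ne.symm h]
        rw [Finset.sum_congr rfl this]
        rw [Finset.sum_ite_eq' T k (fun _ => ψ k i * lam k)]
        simp only [hk, if_pos]
        ring
      calc ∑ i, ‖u i - q i‖ ^ 2 = ∑ i, ∑ k ∈ T, ψ k i * (lam k * ψ k i) :=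
            Finset.sum_congr rfl fun i _ => hnormi i
        _ = ∑ k ∈ T, ∑ i, ψ k i * (lam k * ψ k i) := Finset.sum_comm
        _ = ∑ k ∈ T, lam k := by
            refine Finset.sum_congr rfl fun k _ => ?_
            have : ∑ i, ψ k i * (lam k * ψ k i) = lam k * dotProduct (ψ k) (ψ k) := by
              rw [dotProduct, Finset.mul_sum]
              exact Finset.sum_congr rfl fun i _ => by ring
            rw [this, horth]
            simp
    rw [pod_weighted_error φ w hw K₀ q hqK hqo]
    exact herr
end
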